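/- If G is a cop-win graph, then there exists a number T̄_G and a cop strategy s̄_C such that for every robber strategy s_R, the play resulting from (s̄_C, s_R) ends in capture within at most T̄_G rounds; moreover one may take T̄_G ≤ |V(G)|². -/

import Mathlib

variable {V : Type*}

/-- `v` is in the closed neighborhood of `u` (reflexive graph moves). -/
def cnbr (G : SimpleGraph V) (u v : V) : Prop := u = v ∨ G.Adj u v

/-- The list of the first `n` moves of the play determined by the strategy pair
`(sC, sR)`: the move at an even index is the cop's, at an odd index the robber's
(so the moves are `x₀ y₀ x₁ y₁ ⋯`). -/
def crHist (sC sR : List V → V) : ℕ → List V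
  | 0 => []
  | n + 1 => crHist sC sR n ++ [(if Even n then sC else sR) (crHist sC sR n)]

/-- The `n`-th move of the play determined by `(sC, sR)`. -/
def crMove (sC sR : List V → V) (n : ℕ) : V :=
  (if Even n then sC else sR) (crHist sC sR n)

/-- A legal cop strategy: at any history where it is the cop's turn (even length),
the chosen vertex lies in the closed neighborhood of the cop's previous position
(the initial placement, on the empty history, is unconstrained). -/
def LegalCop (G : SimpleGraph V) (sC : List V → V) : Prop :=
  ∀ h : List V, Even h.length → ∀ x : V, h[h.length - 2]? = some x → cnbr G x (sC h)

/-- A legal robber strategy: at any history where it is the robber's turn (odd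
length at least 3), the chosen vertex lies in the closed neighborhood of the
robber's previous position (the initial placement is unconstrained). -/
def LegalRob (G : SimpleGraph V) (sR : List V → V) : Prop :=
  ∀ h : List V, Odd h.length → 3 ≤ h.length → ∀ y : V, h[h.length - 2]? = some y →
    cnbr G y (sR h)

/-- The capture time `T(sC, sR) ∈ ℕ∞` of the play determined by `(sC, sR)`: the first
round at which the cop's and robber's positions coincide (`⊤` if they never do). -/
noncomputable def capTime (sC sR : List V → V) : ℕ∞ :=
  sInf {t : ℕ∞ | ∃ n : ℕ, crMove sC sR (n + 1) = crMove sC sR n ∧ t = (((n + 1) / 2 : ℕ) : ℕ∞)}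

/-- `G` is cop-win: the cop has a legal strategy capturing every legal robber in
finitely many rounds. -/
def CopWin (G : SimpleGraph V) : Prop :=
  ∃ sC : List V → V, LegalCop G sC ∧ ∀ sR : List V → V, LegalRob G sR → capTime sC sR ≠ ⊤

/-- A memoryless cop strategy: on histories where it is the cop's turn, the move
depends only on the current cop and robber positions. -/
def MemCop (sC : List V → V) : Prop :=
  ∃ f : V → V → V, ∀ h : List V, Even h.length → ∀ x y : V,
    h[h.length - 2]? = some x → h[h.length - 1]? = some y → sC h = f x y

/-- A memoryless robber strategy: on histories where it is the robber's turn, the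
move depends only on the current robber and cop positions. -/
def MemRob (sR : List V → V) : Prop :=
  ∃ f : V → V → V, ∀ h : List V, Odd h.length → ∀ y x : V,
    h[h.length - 2]? = some y → h[h.length - 1]? = some x → sR h = f y x

/-! ### Auxiliary development -/

lemma cnbr_refl (G : SimpleGraph V) (x : V) : cnbr G x x := Or.inl rfl

lemma crHist_succ (sC sR : List V → V) (n : ℕ) :
    crHist sC sR (n+1) = crHist sC sR n ++ [crMove sC sR n] := rfl

lemma crHist_length (sC sR : List V → V) (n : ℕ) : (crHist sC sR n).length = n := by
  induction n with
  | zero => rfl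
  | succ n ih => rw [crHist_succ]; simp [ih]

lemma crHist_getElem (sC sR : List V → V) {k n : ℕ} (h : k < n) :
    (crHist sC sR n)[k]? = some (crMove sC sR k) := by
  induction n with
  | zero => omega
  | succ n ih =>
    rw [crHist_succ]
    rcases Nat.lt_or_ge k n with hk | hk
    · rw [List.getElem?_append_left (by rw [crHist_length]; omega)]; exact ih hk
    · have hkn : k = n := by omega
      subst hkn
      have : (crHist sC sR k ++ [crMove sC sR k])[(crHist sC sR k).length]? = some (crMove sC sR k) :=
        List.getElem?_concat_length
      rwa [crHist_length] at this

lemma crMove_even (sC sR : List V → V) (t : ℕ) :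
    crMove sC sR (2*t) = sC (crHist sC sR (2*t)) := by
  unfold crMove; rw [if_pos ⟨t, two_mul t⟩]

lemma crMove_odd (sC sR : List V → V) (t : ℕ) :
    crMove sC sR (2*t+1) = sR (crHist sC sR (2*t+1)) := by
  unfold crMove
  rw [if_neg (by simp [Nat.even_add_one, parity_simps])]

/-- One step of the attractor construction for the cop. -/
def copFstep (G : SimpleGraph V) (S : Set (V × V)) : Set (V × V) :=
  S ∪ {p | ∃ x', cnbr G p.1 x' ∧ (x' = p.2 ∨ ∀ y', cnbr G p.2 y' → (x', y') ∈ S)}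

/-- Attractor levels: `(x, y) ∈ copW G k` iff the cop, at `x` and to move, with
the robber at `y`, can force capture within `k` cop moves. -/
def copW (G : SimpleGraph V) : ℕ → Set (V × V)
  | 0 => {p | p.1 = p.2}
  | k + 1 => copFstep G (copW G k)

lemma copW_succ (G : SimpleGraph V) (k : ℕ) :
    copW G (k+1) = copFstep G (copW G k) := rfl

lemma copW_subset_succ (G : SimpleGraph V) (k : ℕ) : copW G k ⊆ copW G (k+1) :=
  Set.subset_union_left

lemma copW_mono (G : SimpleGraph V) {a b : ℕ} (h : a ≤ b) : copW G a ⊆ copW G b := by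
  induction b with
  | zero => simp [Nat.le_zero.mp h]
  | succ b ih =>
    rcases Nat.lt_or_ge a (b+1) with hb | hb
    · exact (ih (by omega)).trans (copW_subset_succ G b)
    · have : a = b + 1 := by omega
      subst this; exact subset_rfl

/-- The attractor rank of a state. -/
noncomputable def copRank (G : SimpleGraph V) (p : V × V) : ℕ :=
  sInf {k | p ∈ copW G k}

lemma copRank_le (G : SimpleGraph V) {p : V × V} {m : ℕ} (h : p ∈ copW G m) :
    copRank G p ≤ m := Nat.sInf_le h

lemma mem_copW_copRank (G : SimpleGraph V) {p : V × V} {m : ℕ} (h : p ∈ copW G m) :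
    p ∈ copW G (copRank G p) := by
  have := Nat.sInf_mem (⟨m, h⟩ : Set.Nonempty {k | p ∈ copW G k})
  exact this

lemma copRank_step (G : SimpleGraph V) {p : V × V} {m : ℕ} (h : p ∈ copW G m)
    (h0 : p ∉ copW G 0) :
    ∃ x', cnbr G p.1 x' ∧
      (x' = p.2 ∨ ∀ y', cnbr G p.2 y' → (x', y') ∈ copW G (copRank G p - 1)) := by
  have hr := mem_copW_copRank G h
  have hrne : copRank G p ≠ 0 := fun hz => h0 (hz ▸ hr)
  have hrs : copRank G p = (copRank G p - 1) + 1 := by omega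
  rw [hrs, copW_succ] at hr
  rcases hr with hr | hr
  · exfalso
    have := copRank_le G hr
    omega
  · exact hr

open Classical in
noncomputable def copFc (G : SimpleGraph V) (x y : V) : V :=
  if h : ∃ x', cnbr G x x' ∧
      (x' = y ∨ ∀ y', cnbr G y y' → (x', y') ∈ copW G (copRank G (x, y) - 1)) then
    h.choose
  else x

lemma cnbr_copFc (G : SimpleGraph V) (x y : V) : cnbr G x (copFc G x y) := by
  unfold copFc
  split
  · next h => exact h.choose_spec.1
  · exact cnbr_refl G x

/-- The cop strategy determined by an initial vertex `x₀` and the memoryless rule. -/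
noncomputable def copStrat (G : SimpleGraph V) (x₀ : V) : List V → V :=
  fun h => if h.length = 0 then x₀ else
    copFc G ((h[h.length - 2]?).getD x₀) ((h[h.length - 1]?).getD x₀)

lemma copStrat_legal (G : SimpleGraph V) (x₀ : V) : LegalCop G (copStrat G x₀) := by
  intro h _ x hx
  have hne : h.length ≠ 0 := by
    intro hz
    rw [List.getElem?_eq_none (by omega)] at hx
    simp at hx
  unfold copStrat
  rw [if_neg hne, hx]
  exact cnbr_copFc G x _

lemma copStrat_nil (G : SimpleGraph V) (x₀ : V) : copStrat G x₀ [] = x₀ := rfl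

open Classical in
noncomputable def robR0 (G : SimpleGraph V) [Fintype V] (x : V) : V :=
  if h : ∃ y, (x, y) ∉ copW G (Fintype.card V ^ 2) then h.choose else x

open Classical in
noncomputable def robG (G : SimpleGraph V) [Fintype V] (y x' : V) : V :=
  if h : ∃ y', cnbr G y y' ∧ (x', y') ∉ copW G (Fintype.card V ^ 2) then h.choose else y

/-- The robber strategy determined by the evasion rule. -/
noncomputable def robStrat (G : SimpleGraph V) [Fintype V] (v0 : V) : List V → V :=
  fun h => if h.length = 1 then robR0 G ((h[0]?).getD v0)
    else robG G ((h[h.length - 2]?).getD v0) ((h[h.length - 1]?).getD v0)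

lemma robStrat_legal (G : SimpleGraph V) [Fintype V] (v0 : V) :
    LegalRob G (robStrat G v0) := by
  intro h _ h3 y hy
  have hne : h.length ≠ 1 := by omega
  unfold robStrat
  rw [if_neg hne, hy]
  simp only [Option.getD_some]
  unfold robG
  split
  · next hh => exact hh.choose_spec.1
  · exact cnbr_refl G y

/-- The attractor stabilizes by level `|V|²`. -/
lemma copW_fixpoint (G : SimpleGraph V) [Fintype V] [Nonempty V] :
    copW G (Fintype.card V ^ 2 + 1) = copW G (Fintype.card V ^ 2) := by
  set M := Fintype.card V ^ 2 with hM
  have hstab : ∃ k < M, copW G (k+1) = copW G k := by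
    by_contra hc
    push_neg at hc
    have hcard : ∀ k ≤ M, k + 1 ≤ (copW G k).ncard := by
      intro k hk
      induction k with
      | zero =>
        have hne : (copW G 0).Nonempty := ⟨(Classical.arbitrary V, Classical.arbitrary V), rfl⟩
        have := (Set.ncard_pos (Set.toFinite _)).mpr hne
        omega
      | succ k ih =>
        have hss : copW G k ⊂ copW G (k+1) :=
          HasSubset.Subset.ssubset_of_ne (copW_subset_succ G k) (fun he => hc k (by omega) he.symm)
        have := Set.ncard_lt_ncard hss (Set.toFinite _)
        have := ih (by omega)
        omega
    have h1 : M + 1 ≤ (copW G M).ncard := hcard M le_rfl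
    have h2 : (copW G M).ncard ≤ M := by
      refine le_trans (Set.ncard_le_ncard (Set.subset_univ _) (Set.toFinite _)) ?_
      rw [Set.ncard_univ, Nat.card_eq_fintype_card, Fintype.card_prod, hM, sq]
    omega
  obtain ⟨k, hk, hkeq⟩ := hstab
  have hprop : ∀ i, copW G (k + i) = copW G k := by
    intro i
    induction i with
    | zero => rfl
    | succ i ih => rw [← Nat.add_assoc, copW_succ, ih, ← copW_succ, hkeq]
  have e1 := hprop (M - k)
  have e2 := hprop (M + 1 - k)
  rw [show k + (M - k) = M by omega] at e1
  rw [show k + (M + 1 - k) = M + 1 by omega] at e2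
  rw [e1, e2]

section Play

variable (G : SimpleGraph V)

/-- Cop side: if the state after round `t` is in `copW G j`, capture happens soon. -/
lemma cop_capture (x₀ : V) (sR : List V → V) (hR : LegalRob G sR) :
    ∀ j t : ℕ,
      (crMove (copStrat G x₀) sR (2*t), crMove (copStrat G x₀) sR (2*t+1)) ∈ copW G j →
      ∃ n : ℕ, crMove (copStrat G x₀) sR (n+1) = crMove (copStrat G x₀) sR n ∧
        n + 1 ≤ 2*t + 2*j + 1 := by
  classical
  set sC := copStrat G x₀ with hsC
  have hcop : ∀ t : ℕ,
      crMove sC sR (2*(t+1)) = copFc G (crMove sC sR (2*t)) (crMove sC sR (2*t+1)) := by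
    intro t
    rw [crMove_even]
    show copStrat G x₀ (crHist sC sR (2*(t+1))) = _
    unfold copStrat
    rw [if_neg (by rw [crHist_length]; omega)]
    rw [crHist_length]
    rw [show 2*(t+1) - 2 = 2*t by omega, show 2*(t+1) - 1 = 2*t+1 by omega]
    rw [crHist_getElem _ _ (by omega), crHist_getElem _ _ (by omega)]
    rfl
  have hrob : ∀ t : ℕ, cnbr G (crMove sC sR (2*t+1)) (crMove sC sR (2*(t+1)+1)) := by
    intro t
    have := hR (crHist sC sR (2*(t+1)+1))
      (by rw [crHist_length]; exact ⟨t+1, by omega⟩)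
      (by rw [crHist_length]; omega)
      (crMove sC sR (2*t+1))
      (by rw [crHist_length, show 2*(t+1)+1-2 = 2*t+1 by omega]
          exact crHist_getElem _ _ (by omega))
    rw [crMove_odd sC sR (t+1)]
    exact this
  intro j
  induction j with
  | zero =>
    intro t hmem
    exact ⟨2*t, hmem.symm, by omega⟩
  | succ j ih =>
    intro t hmem
    by_cases h0 : (crMove sC sR (2*t), crMove sC sR (2*t+1)) ∈ copW G 0
    · exact ⟨2*t, h0.symm, by omega⟩
    · have hcond := copRank_step G hmem h0
      dsimp only at hcond
      have hfc : crMove sC sR (2*(t+1)) = hcond.choose := by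
        rw [hcop t]
        unfold copFc
        rw [dif_pos hcond]
      obtain ⟨hcn, hcase⟩ := hcond.choose_spec
      rcases hcase with hcap | hall
      · refine ⟨2*t+1, ?_, by omega⟩
        rw [show 2*t+1+1 = 2*(t+1) by ring, hfc, hcap]
      · have hmem' : (crMove sC sR (2*(t+1)), crMove sC sR (2*(t+1)+1)) ∈
            copW G (copRank G (crMove sC sR (2*t), crMove sC sR (2*t+1)) - 1) := by
          rw [hfc]
          exact hall _ (hrob t)
        have hrle : copRank G (crMove sC sR (2*t), crMove sC sR (2*t+1)) - 1 ≤ j := by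
          have := copRank_le G hmem
          omega
        obtain ⟨n, hn1, hn2⟩ := ih (t+1) (copW_mono G hrle hmem')
        exact ⟨n, hn1, by omega⟩

/-- Robber side: if from every cop position there is an escape, the robber's strategy
avoids capture forever. -/
lemma rob_avoid [Fintype V] (sC : List V → V) (hC : LegalCop G sC) (v0 : V)
    (hfix : copW G (Fintype.card V ^ 2 + 1) = copW G (Fintype.card V ^ 2))
    (hall : ∀ x, ∃ y, (x, y) ∉ copW G (Fintype.card V ^ 2)) :
    ∀ n : ℕ, crMove sC (robStrat G v0) (n+1) ≠ crMove sC (robStrat G v0) n := by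
  classical
  set M := Fintype.card V ^ 2 with hM
  set sR := robStrat G v0 with hsR
  -- cop legality along the play
  have hcopleg : ∀ t : ℕ, cnbr G (crMove sC sR (2*t)) (crMove sC sR (2*(t+1))) := by
    intro t
    have := hC (crHist sC sR (2*(t+1)))
      (by rw [crHist_length]; exact ⟨t+1, by omega⟩)
      (crMove sC sR (2*t))
      (by rw [crHist_length, show 2*(t+1)-2 = 2*t by omega]
          exact crHist_getElem _ _ (by omega))
    rw [crMove_even sC sR (t+1)]
    exact this
  -- key step
  have step : ∀ t : ℕ, (crMove sC sR (2*t), crMove sC sR (2*t+1)) ∉ copW G M →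
      crMove sC sR (2*(t+1)) ≠ crMove sC sR (2*t+1) ∧
      (crMove sC sR (2*(t+1)), crMove sC sR (2*(t+1)+1)) ∉ copW G M := by
    intro t hnot
    have hnot' : (crMove sC sR (2*t), crMove sC sR (2*t+1)) ∉ copW G (M+1) := by
      rw [hfix]; exact hnot
    rw [copW_succ] at hnot'
    have hnot2 : ¬ (∃ x', cnbr G (crMove sC sR (2*t)) x' ∧
        (x' = crMove sC sR (2*t+1) ∨
          ∀ y', cnbr G (crMove sC sR (2*t+1)) y' → (x', y') ∈ copW G M)) := by
      intro hx
      exact hnot' (Or.inr hx)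
    push_neg at hnot2
    have hx' := hnot2 (crMove sC sR (2*(t+1))) (hcopleg t)
    obtain ⟨hne, y', hy'cn, hy'not⟩ := hx'
    -- robber's move is robG applied to current positions
    have hymove : crMove sC sR (2*(t+1)+1) = robG G (crMove sC sR (2*t+1)) (crMove sC sR (2*(t+1))) := by
      rw [crMove_odd sC sR (t+1)]
      show robStrat G v0 (crHist sC sR (2*(t+1)+1)) = _
      unfold robStrat
      rw [if_neg (by rw [crHist_length]; omega)]
      rw [crHist_length]
      rw [show 2*(t+1)+1-2 = 2*t+1 by omega, show 2*(t+1)+1-1 = 2*(t+1) by omega]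
      rw [crHist_getElem _ _ (by omega), crHist_getElem _ _ (by omega)]
      rfl
    have hex : ∃ yy, cnbr G (crMove sC sR (2*t+1)) yy ∧
        (crMove sC sR (2*(t+1)), yy) ∉ copW G M := ⟨y', hy'cn, hy'not⟩
    have hspec := hex.choose_spec
    have : crMove sC sR (2*(t+1)+1) = hex.choose := by
      rw [hymove]
      unfold robG
      rw [← hM, dif_pos hex]
    refine ⟨hne, ?_⟩
    rw [this]
    exact hspec.2
  -- invariant
  have inv : ∀ t : ℕ, (crMove sC sR (2*t), crMove sC sR (2*t+1)) ∉ copW G M := by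
    intro t
    induction t with
    | zero =>
      -- initial placements
      have hy0 : crMove sC sR 1 = robR0 G (crMove sC sR 0) := by
        have : crMove sC sR 1 = sR (crHist sC sR 1) := by
          have := crMove_odd sC sR 0
          simpa using this
        rw [this]
        show robStrat G v0 (crHist sC sR 1) = _
        unfold robStrat
        rw [if_pos (crHist_length sC sR 1)]
        rw [crHist_getElem _ _ (by omega)]
        rfl
      have hex : ∃ y, (crMove sC sR 0, y) ∉ copW G M := hall _
      have hspec := hex.choose_spec
      have h1 : crMove sC sR 1 = hex.choose := by
        rw [hy0]
        unfold robR0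
        rw [← hM, dif_pos hex]
      intro hmem
      rw [show 2*0 = 0 by ring, show 2*0+1 = 1 by ring, h1] at hmem
      exact hspec hmem
    | succ t ih => exact (step t ih).2
  -- no capture at any step
  intro n
  rcases Nat.even_or_odd' n with ⟨t, rfl | rfl⟩
  · -- n = 2t : robber's move vs cop position
    intro hcap
    apply inv t
    have hxy : crMove sC sR (2*t) = crMove sC sR (2*t+1) := hcap.symm
    have : (crMove sC sR (2*t), crMove sC sR (2*t+1)) ∈ copW G 0 := hxy
    exact copW_mono G (Nat.zero_le M) this
  · -- n = 2t+1 : cop's move vs robber position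
    intro hcap
    have := (step t (inv t)).1
    rw [show 2*t+1+1 = 2*(t+1) by ring] at hcap
    exact this hcap

end Play

/-- If `G` is a cop-win (finite connected reflexive) graph, there is a
bound `T̄_G` and a legal cop strategy `s̄_C` capturing every legal robber within at
most `T̄_G` rounds; moreover one may take `T̄_G ≤ |V(G)|²`. -/
theorem copwin_bounded_capture {V : Type*} [Fintype V] (G : SimpleGraph V)
    (hconn : G.Connected) (hcw : CopWin G) :
    ∃ (Tbar : ℕ) (sC : List V → V), LegalCop G sC ∧
      (∀ sR : List V → V, LegalRob G sR → capTime sC sR ≤ (Tbar : ℕ∞)) ∧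
      Tbar ≤ Fintype.card V ^ 2 := by
  classical
  haveI : Nonempty V := hconn.nonempty
  have hfix := copW_fixpoint G
  by_cases hx : ∃ x₀ : V, ∀ y : V, (x₀, y) ∈ copW G (Fintype.card V ^ 2)
  · obtain ⟨x₀, hx₀⟩ := hx
    refine ⟨Fintype.card V ^ 2, copStrat G x₀, copStrat_legal G x₀, ?_, le_rfl⟩
    intro sR hR
    have h0 : crMove (copStrat G x₀) sR 0 = x₀ := by
      have := crMove_even (copStrat G x₀) sR 0
      simpa [copStrat_nil, crHist] using this
    have hinit : (crMove (copStrat G x₀) sR (2*0), crMove (copStrat G x₀) sR (2*0+1)) ∈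
        copW G (Fintype.card V ^ 2) := by
      rw [show 2*0 = 0 by ring, h0]
      exact hx₀ _
    obtain ⟨n, hcap, hle⟩ := cop_capture G x₀ sR hR (Fintype.card V ^ 2) 0 hinit
    have hmem : (((n+1)/2 : ℕ) : ℕ∞) ∈ {t : ℕ∞ | ∃ m : ℕ,
        crMove (copStrat G x₀) sR (m+1) = crMove (copStrat G x₀) sR m ∧
        t = (((m+1)/2 : ℕ) : ℕ∞)} := ⟨n, hcap, rfl⟩
    refine le_trans (sInf_le hmem) ?_
    exact Nat.cast_le.mpr (by omega)
  · push_neg at hx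
    exfalso
    obtain ⟨sC, hC, hwin⟩ := hcw
    have v0 := Classical.arbitrary V
    apply hwin (robStrat G v0) (robStrat_legal G v0)
    have hav := rob_avoid G sC hC v0 hfix hx
    have hempty : {t : ℕ∞ | ∃ n : ℕ,
        crMove sC (robStrat G v0) (n+1) = crMove sC (robStrat G v0) n ∧
        t = (((n+1)/2 : ℕ) : ℕ∞)} = ∅ := by
      ext t
      simp only [Set.mem_setOf_eq, Set.mem_empty_iff_false, iff_false]
      rintro ⟨n, hcap, -⟩
      exact hav n hcap
    unfold capTime
    rw [hempty, sInf_empty]
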